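/- Let φ, θ : ℝ³ → Mₙ(ℝ) be infinitely differentiable and satisfy the inhomogeneous Burgers equations φ_y = φ_xx + 2φ_x φ + 2θ_x and φ_t = φ_xxx + 3φ_xx φ + 3φ_x² + 3φ_x φ² + 3θ_x φ + (3/2)(θ_y + θ_xx). Then φ satisfies the noncommutative potential KP equation ∂_x(4φ_t − φ_xxx − 6φ_x²) − 3φ_yy + 6(φ_x φ_y − φ_y φ_x) = 0. -/

import Mathlib

attribute [local instance] Matrix.normedAddCommGroup Matrix.normedSpace

section Helpers

variable {E : Type*} [NormedAddCommGroup E] [NormedSpace ℝ E]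

theorem contDiff_pd {f : ℝ × ℝ × ℝ → E} (hf : ContDiff ℝ (⊤ : ℕ∞) f) (v : ℝ × ℝ × ℝ) :
    ContDiff ℝ (⊤ : ℕ∞) (fun p => fderiv ℝ f p v) :=
  (hf.fderiv_right (by decide)).clm_apply contDiff_const

theorem pd_add {f g : ℝ × ℝ × ℝ → E} {q : ℝ × ℝ × ℝ} (v : ℝ × ℝ × ℝ)
    (hf : DifferentiableAt ℝ f q) (hg : DifferentiableAt ℝ g q) :
    fderiv ℝ (fun r => f r + g r) q v = fderiv ℝ f q v + fderiv ℝ g q v := by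
  rw [fderiv_fun_add hf hg]; rfl

theorem pd_sub {f g : ℝ × ℝ × ℝ → E} {q : ℝ × ℝ × ℝ} (v : ℝ × ℝ × ℝ)
    (hf : DifferentiableAt ℝ f q) (hg : DifferentiableAt ℝ g q) :
    fderiv ℝ (fun r => f r - g r) q v = fderiv ℝ f q v - fderiv ℝ g q v := by
  rw [fderiv_fun_sub hf hg]; rfl

theorem pd_smul {f : ℝ × ℝ × ℝ → E} {q : ℝ × ℝ × ℝ} (c : ℝ) (v : ℝ × ℝ × ℝ)
    (hf : DifferentiableAt ℝ f q) :
    fderiv ℝ (fun r => c • f r) q v = c • fderiv ℝ f q v := by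
  rw [fderiv_fun_const_smul hf c]; rfl

theorem pd_swap {f : ℝ × ℝ × ℝ → E} (hf : ContDiff ℝ (⊤ : ℕ∞) f) (q v w : ℝ × ℝ × ℝ) :
    fderiv ℝ (fun r => fderiv ℝ f r v) q w = fderiv ℝ (fun r => fderiv ℝ f r w) q v := by
  have hd : Differentiable ℝ (fderiv ℝ f) :=
    (hf.fderiv_right (m := (⊤ : ℕ∞)) (by decide)).differentiable (by decide)
  have hsymm : IsSymmSndFDerivAt ℝ f q :=
    hf.contDiffAt.isSymmSndFDerivAt
      (by rw [minSmoothness_of_isRCLikeNormedField]; exact ENat.LEInfty.out)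
  have e : ∀ u : ℝ × ℝ × ℝ, fderiv ℝ (fun r => fderiv ℝ f r u) q
      = (fderiv ℝ (fderiv ℝ f) q).flip u := by
    intro u
    rw [fderiv_clm_apply (hd q) (differentiableAt_const u)]
    simp
  rw [e v, e w]
  simp only [ContinuousLinearMap.flip_apply]
  exact (hsymm.eq v w).symm

end Helpers

section MulHelpers

variable {n : ℕ}

instance matNormTop (n : ℕ) : TopologicalSpace (Matrix (Fin n) (Fin n) ℝ) :=
  PseudoMetricSpace.toUniformSpace.toTopologicalSpace

/-- Matrix multiplication as a continuous bilinear map. -/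
noncomputable def mulL (n : ℕ) :
    Matrix (Fin n) (Fin n) ℝ →L[ℝ] Matrix (Fin n) (Fin n) ℝ →L[ℝ] Matrix (Fin n) (Fin n) ℝ :=
  LinearMap.toContinuousLinearMap
    { toFun := fun a => LinearMap.toContinuousLinearMap (LinearMap.mulLeft ℝ a)
      map_add' := by intro a b; ext c; simp [add_mul]
      map_smul' := by intro r a; ext c; simp [smul_mul_assoc] }

@[simp] theorem mulL_apply (a b : Matrix (Fin n) (Fin n) ℝ) : mulL n a b = a * b := rfl

variable {X : Type*} [NormedAddCommGroup X] [NormedSpace ℝ X]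

@[fun_prop]
theorem ContDiff.matmul {f g : X → Matrix (Fin n) (Fin n) ℝ} {m : WithTop ℕ∞}
    (hf : ContDiff ℝ m f) (hg : ContDiff ℝ m g) :
    ContDiff ℝ m (fun p => f p * g p) :=
  (((mulL n).contDiff.of_le le_top).comp hf).clm_apply hg

@[fun_prop]
theorem Differentiable.matmul {f g : X → Matrix (Fin n) (Fin n) ℝ}
    (hf : Differentiable ℝ f) (hg : Differentiable ℝ g) :
    Differentiable ℝ (fun p => f p * g p) := by
  intro p
  exact ((((mulL n).hasFDerivAt).comp p (hf p).hasFDerivAt).clm_apply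
    (hg p).hasFDerivAt).differentiableAt

@[fun_prop]
theorem DifferentiableAt.matmul {f g : X → Matrix (Fin n) (Fin n) ℝ} {p : X}
    (hf : DifferentiableAt ℝ f p) (hg : DifferentiableAt ℝ g p) :
    DifferentiableAt ℝ (fun q => f q * g q) p :=
  ((((mulL n).hasFDerivAt).comp p hf.hasFDerivAt).clm_apply hg.hasFDerivAt).differentiableAt

theorem pd_mul {f g : ℝ × ℝ × ℝ → Matrix (Fin n) (Fin n) ℝ} {q : ℝ × ℝ × ℝ} (v : ℝ × ℝ × ℝ)
    (hf : DifferentiableAt ℝ f q) (hg : DifferentiableAt ℝ g q) :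
    fderiv ℝ (fun r => f r * g r) q v
      = fderiv ℝ f q v * g q + f q * fderiv ℝ g q v := by
  have hc : HasFDerivAt (fun r => mulL n (f r)) ((mulL n).comp (fderiv ℝ f q)) q :=
    ((mulL n).hasFDerivAt).comp q hf.hasFDerivAt
  have h := hc.clm_apply hg.hasFDerivAt
  rw [show (fun r => f r * g r) = fun r => mulL n (f r) (g r) from rfl, h.fderiv]
  simp [add_comm]

end MulHelpers


/-- Partial derivative in the `x`-direction of a function of three real variables. -/
noncomputable def pdx {E : Type*} [NormedAddCommGroup E] [NormedSpace ℝ E]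
    (f : ℝ × ℝ × ℝ → E) : ℝ × ℝ × ℝ → E :=
  fun p => fderiv ℝ f p (1, 0, 0)

/-- Partial derivative in the `y`-direction of a function of three real variables. -/
noncomputable def pdy {E : Type*} [NormedAddCommGroup E] [NormedSpace ℝ E]
    (f : ℝ × ℝ × ℝ → E) : ℝ × ℝ × ℝ → E :=
  fun p => fderiv ℝ f p (0, 1, 0)

/-- Partial derivative in the `t`-direction of a function of three real variables. -/
noncomputable def pdt {E : Type*} [NormedAddCommGroup E] [NormedSpace ℝ E]
    (f : ℝ × ℝ × ℝ → E) : ℝ × ℝ × ℝ → E :=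
  fun p => fderiv ℝ f p (0, 0, 1)

set_option maxHeartbeats 1600000 in
/-- Any solution of the first two inhomogeneous Burgers equations (the pKP
hierarchy written as an inhomogeneous Burgers hierarchy) solves the
noncommutative potential KP equation. -/
theorem pKP_of_inhomogeneous_burgers (n : ℕ)
    (φ θ : ℝ × ℝ × ℝ → Matrix (Fin n) (Fin n) ℝ)
    (hφ : ContDiff ℝ (⊤ : ℕ∞) φ) (hθ : ContDiff ℝ (⊤ : ℕ∞) θ)
    (hb1 : ∀ p, pdy φ p = pdx (pdx φ) p + 2 • (pdx φ p * φ p) + 2 • pdx θ p)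
    (hb2 : ∀ p, pdt φ p = pdx (pdx (pdx φ)) p + 3 • (pdx (pdx φ) p * φ p)
        + 3 • (pdx φ p * pdx φ p) + 3 • (pdx φ p * (φ p * φ p))
        + 3 • (pdx θ p * φ p)
        + (3 / 2 : ℝ) • (pdy θ p + pdx (pdx θ) p)) :
    ∀ p, pdx (fun q => (4 : ℝ) • pdt φ q - pdx (pdx (pdx φ)) q
          - (6 : ℝ) • (pdx φ q * pdx φ q)) p
        - (3 : ℝ) • pdy (pdy φ) p
        + (6 : ℝ) • (pdx φ p * pdy φ p - pdy φ p * pdx φ p) = 0 := by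
  intro p
  -- smoothness of the basic building blocks
  have c1 : ContDiff ℝ (⊤ : ℕ∞) (fun r => fderiv ℝ φ r ((1:ℝ), (0:ℝ), (0:ℝ))) :=
    contDiff_pd hφ _
  have c2 : ContDiff ℝ (⊤ : ℕ∞)
      (fun r => fderiv ℝ (fun s => fderiv ℝ φ s ((1:ℝ), (0:ℝ), (0:ℝ))) r ((1:ℝ), (0:ℝ), (0:ℝ))) :=
    contDiff_pd c1 _
  have c3 : ContDiff ℝ (⊤ : ℕ∞)
      (fun r => fderiv ℝ (fun s => fderiv ℝ (fun u => fderiv ℝ φ u ((1:ℝ), (0:ℝ), (0:ℝ))) s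
        ((1:ℝ), (0:ℝ), (0:ℝ))) r ((1:ℝ), (0:ℝ), (0:ℝ))) :=
    contDiff_pd c2 _
  have cθ1 : ContDiff ℝ (⊤ : ℕ∞) (fun r => fderiv ℝ θ r ((1:ℝ), (0:ℝ), (0:ℝ))) :=
    contDiff_pd hθ _
  have cθ2 : ContDiff ℝ (⊤ : ℕ∞)
      (fun r => fderiv ℝ (fun s => fderiv ℝ θ s ((1:ℝ), (0:ℝ), (0:ℝ))) r ((1:ℝ), (0:ℝ), (0:ℝ))) :=
    contDiff_pd cθ1 _
  have cθy : ContDiff ℝ (⊤ : ℕ∞) (fun r => fderiv ℝ θ r ((0:ℝ), (1:ℝ), (0:ℝ))) :=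
    contDiff_pd hθ _
  -- differentiability facts, for the discharger
  have d0 : Differentiable ℝ φ := hφ.differentiable (by decide)
  have d1 : Differentiable ℝ (fun r => fderiv ℝ φ r ((1:ℝ), (0:ℝ), (0:ℝ))) :=
    c1.differentiable (by decide)
  have d2 : Differentiable ℝ
      (fun r => fderiv ℝ (fun s => fderiv ℝ φ s ((1:ℝ), (0:ℝ), (0:ℝ))) r ((1:ℝ), (0:ℝ), (0:ℝ))) :=
    c2.differentiable (by decide)
  have d3 : Differentiable ℝ
      (fun r => fderiv ℝ (fun s => fderiv ℝ (fun u => fderiv ℝ φ u ((1:ℝ), (0:ℝ), (0:ℝ))) s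
        ((1:ℝ), (0:ℝ), (0:ℝ))) r ((1:ℝ), (0:ℝ), (0:ℝ))) :=
    c3.differentiable (by decide)
  have dθ0 : Differentiable ℝ θ := hθ.differentiable (by decide)
  have dθ1 : Differentiable ℝ (fun r => fderiv ℝ θ r ((1:ℝ), (0:ℝ), (0:ℝ))) :=
    cθ1.differentiable (by decide)
  have dθ2 : Differentiable ℝ
      (fun r => fderiv ℝ (fun s => fderiv ℝ θ s ((1:ℝ), (0:ℝ), (0:ℝ))) r ((1:ℝ), (0:ℝ), (0:ℝ))) :=
    cθ2.differentiable (by decide)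
  have dθy : Differentiable ℝ (fun r => fderiv ℝ θ r ((0:ℝ), (1:ℝ), (0:ℝ))) :=
    cθy.differentiable (by decide)
  -- the Burgers equations, with real scalars
  unfold pdx pdy at hb1
  unfold pdx pdy pdt at hb2
  have hb1' : ∀ q : ℝ × ℝ × ℝ, fderiv ℝ φ q ((0:ℝ), (1:ℝ), (0:ℝ))
      = fderiv ℝ (fun s => fderiv ℝ φ s ((1:ℝ), (0:ℝ), (0:ℝ))) q ((1:ℝ), (0:ℝ), (0:ℝ))
        + (2:ℝ) • (fderiv ℝ φ q ((1:ℝ), (0:ℝ), (0:ℝ)) * φ q)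
        + (2:ℝ) • fderiv ℝ θ q ((1:ℝ), (0:ℝ), (0:ℝ)) := by
    intro q
    rw [hb1 q]
    simp only [← Nat.cast_smul_eq_nsmul ℝ, Nat.cast_ofNat]
  have hb2' : ∀ q : ℝ × ℝ × ℝ, fderiv ℝ φ q ((0:ℝ), (0:ℝ), (1:ℝ))
      = fderiv ℝ (fun s => fderiv ℝ (fun u => fderiv ℝ φ u ((1:ℝ), (0:ℝ), (0:ℝ))) s
          ((1:ℝ), (0:ℝ), (0:ℝ))) q ((1:ℝ), (0:ℝ), (0:ℝ))
        + (3:ℝ) • (fderiv ℝ (fun s => fderiv ℝ φ s ((1:ℝ), (0:ℝ), (0:ℝ))) q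
            ((1:ℝ), (0:ℝ), (0:ℝ)) * φ q)
        + (3:ℝ) • (fderiv ℝ φ q ((1:ℝ), (0:ℝ), (0:ℝ)) * fderiv ℝ φ q ((1:ℝ), (0:ℝ), (0:ℝ)))
        + (3:ℝ) • (fderiv ℝ φ q ((1:ℝ), (0:ℝ), (0:ℝ)) * (φ q * φ q))
        + (3:ℝ) • (fderiv ℝ θ q ((1:ℝ), (0:ℝ), (0:ℝ)) * φ q)
        + (3 / 2 : ℝ) • (fderiv ℝ θ q ((0:ℝ), (1:ℝ), (0:ℝ))
            + fderiv ℝ (fun s => fderiv ℝ θ s ((1:ℝ), (0:ℝ), (0:ℝ))) q ((1:ℝ), (0:ℝ), (0:ℝ))) := by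
    intro q
    rw [hb2 q]
    simp only [← Nat.cast_smul_eq_nsmul ℝ, Nat.cast_ofNat]
  -- commuting mixed partial derivatives
  have sφ : ∀ q : ℝ × ℝ × ℝ,
      fderiv ℝ (fun r => fderiv ℝ φ r ((1:ℝ), (0:ℝ), (0:ℝ))) q ((0:ℝ), (1:ℝ), (0:ℝ))
        = fderiv ℝ (fun r => fderiv ℝ φ r ((0:ℝ), (1:ℝ), (0:ℝ))) q ((1:ℝ), (0:ℝ), (0:ℝ)) :=
    fun q => pd_swap hφ q _ _
  have sφ2 : ∀ q : ℝ × ℝ × ℝ,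
      fderiv ℝ (fun r => fderiv ℝ (fun s => fderiv ℝ φ s ((1:ℝ), (0:ℝ), (0:ℝ))) r
          ((1:ℝ), (0:ℝ), (0:ℝ))) q ((0:ℝ), (1:ℝ), (0:ℝ))
        = fderiv ℝ (fun r => fderiv ℝ (fun s => fderiv ℝ φ s ((1:ℝ), (0:ℝ), (0:ℝ))) r
          ((0:ℝ), (1:ℝ), (0:ℝ))) q ((1:ℝ), (0:ℝ), (0:ℝ)) :=
    fun q => pd_swap c1 q _ _
  have sθ : ∀ q : ℝ × ℝ × ℝ,
      fderiv ℝ (fun r => fderiv ℝ θ r ((1:ℝ), (0:ℝ), (0:ℝ))) q ((0:ℝ), (1:ℝ), (0:ℝ))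
        = fderiv ℝ (fun r => fderiv ℝ θ r ((0:ℝ), (1:ℝ), (0:ℝ))) q ((1:ℝ), (0:ℝ), (0:ℝ)) :=
    fun q => pd_swap hθ q _ _
  unfold pdx pdy pdt
  simp (disch := fun_prop) only [hb1', hb2', sφ, sφ2, sθ, pd_add, pd_sub, pd_smul, pd_mul,
    mul_add, add_mul, smul_add, mul_assoc, smul_mul_assoc, mul_smul_comm, smul_smul]
  module
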